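/- For every fixed real E, the function λ ↦ (1/(4π)) · ∫_0^{2π} log(1 + (E − λ·cos x)²) dx − log(λ/2) is O(1/λ) as λ → +∞. -/

import Mathlib

open Real intervalIntegral

noncomputable def Lr (r : ℝ) : ℝ := ∫ x in (0:ℝ)..(2*π), Real.log (1 - 2*r*Real.cos x + r^2)

lemma P_pos {r : ℝ} (hr : |r| < 1) (x : ℝ) : 0 < 1 - 2*r*Real.cos x + r^2 := by
  have h1 : 2*r*Real.cos x ≤ 2 * |r| := by
    calc 2*r*Real.cos x ≤ |2*r*Real.cos x| := le_abs_self _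
    _ = 2 * |r| * |Real.cos x| := by rw [abs_mul, abs_mul, abs_two]
    _ ≤ 2 * |r| * 1 := by nlinarith [abs_nonneg r, Real.abs_cos_le_one x]
    _ = 2 * |r| := by ring
  nlinarith [sq_abs r, sq_nonneg (1 - |r|)]

lemma P_cont {r : ℝ} (hr : |r| < 1) :
    Continuous (fun x => Real.log (1 - 2*r*Real.cos x + r^2)) := by
  apply Continuous.log (by continuity)
  exact fun x => (P_pos hr x).ne'

lemma P_intble {r : ℝ} (hr : |r| < 1) (a b : ℝ) :
    IntervalIntegrable (fun x => Real.log (1 - 2*r*Real.cos x + r^2)) MeasureTheory.volume a b :=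
  (P_cont hr).intervalIntegrable a b

lemma P_periodic (r : ℝ) :
    Function.Periodic (fun x => Real.log (1 - 2*r*Real.cos x + r^2)) (2*π) := by
  intro x; simp [Real.cos_add_two_pi]

lemma Lr_double {r : ℝ} (hr0 : 0 ≤ r) (hr : r < 1) : Lr (r^2) = 2 * Lr r := by
  have hr' : |r| < 1 := by rwa [abs_of_nonneg hr0]
  have hr2 : |r^2| < 1 := by rw [abs_of_nonneg (sq_nonneg r)]; nlinarith
  have hrn : |(-r)| < 1 := by rwa [abs_neg]
  have key : ∀ x : ℝ, Real.log (1 - 2*r^2*Real.cos (2*x) + (r^2)^2)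
      = Real.log (1 - 2*r*Real.cos x + r^2) + Real.log (1 - 2*(-r)*Real.cos x + (-r)^2) := by
    intro x
    rw [← Real.log_mul (P_pos hr' x).ne' (P_pos hrn x).ne']
    congr 1
    nlinarith [Real.cos_two_mul x]
  have sub := smul_integral_comp_mul_left
    (f := fun x => Real.log (1 - 2*r^2*Real.cos x + (r^2)^2)) (a := 0) (b := 2*π) 2
  -- sub : 2 • ∫ x in 0..2π, f (2*x) = ∫ x in 2*0..2*(2π), f x
  have per2 : (∫ x in (2*0:ℝ)..(2*(2*π)), Real.log (1 - 2*r^2*Real.cos x + (r^2)^2))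
      = 2 * Lr (r^2) := by
    have h1 : (∫ x in (2*0:ℝ)..(2*(2*π)), Real.log (1 - 2*r^2*Real.cos x + (r^2)^2))
        = (∫ x in (2*0:ℝ)..(2*π), Real.log (1 - 2*r^2*Real.cos x + (r^2)^2))
        + ∫ x in (2*π:ℝ)..(2*(2*π)), Real.log (1 - 2*r^2*Real.cos x + (r^2)^2) := by
      rw [integral_add_adjacent_intervals (P_intble hr2 _ _) (P_intble hr2 _ _)]
    have h2 : (∫ x in (2*π:ℝ)..(2*(2*π)), Real.log (1 - 2*r^2*Real.cos x + (r^2)^2))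
        = Lr (r^2) := by
      have := (P_periodic (r^2)).intervalIntegral_add_eq (2*π) 0
      simp only [zero_add] at this
      rw [show (2*(2*π):ℝ) = 2*π + 2*π by ring, this]; rfl
    rw [h1, h2]
    have : (2*0:ℝ) = 0 := by ring
    rw [this, Lr]; ring
  have shift : (∫ x in (0:ℝ)..(2*π), Real.log (1 - 2*(-r)*Real.cos x + (-r)^2)) = Lr r := by
    have hcos : ∀ x ∈ Set.uIcc (0:ℝ) (2*π), Real.log (1 - 2*(-r)*Real.cos x + (-r)^2)
        = Real.log (1 - 2*r*Real.cos (x+π) + r^2) := by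
      intro x _; rw [Real.cos_add_pi]; ring_nf
    rw [intervalIntegral.integral_congr hcos]
    rw [intervalIntegral.integral_comp_add_right (fun x => Real.log (1 - 2*r*Real.cos x + r^2)) π]
    have := (P_periodic r).intervalIntegral_add_eq π 0
    simp only [zero_add] at this
    rw [zero_add, show (2*π+π:ℝ) = π + 2*π by ring, this]; rfl
  have comp : (∫ x in (0:ℝ)..(2*π), Real.log (1 - 2*r^2*Real.cos (2*x) + (r^2)^2))
      = Lr r + Lr r := by
    have hk : ∀ x ∈ Set.uIcc (0:ℝ) (2*π), Real.log (1 - 2*r^2*Real.cos (2*x) + (r^2)^2)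
      = Real.log (1 - 2*r*Real.cos x + r^2) + Real.log (1 - 2*(-r)*Real.cos x + (-r)^2) :=
      fun x _ => key x
    rw [intervalIntegral.integral_congr hk,
        intervalIntegral.integral_add (P_intble hr' _ _) (P_intble hrn _ _), shift]
    rfl
  rw [per2, comp, smul_eq_mul] at sub
  linarith

lemma Lr_bound {s : ℝ} (hs0 : 0 ≤ s) (hs : s < 1) : |Lr s| ≤ 4*π*(-Real.log (1-s)) := by
  have hs' : |s| < 1 := by rwa [abs_of_nonneg hs0]
  have hb : ∀ x : ℝ, |Real.log (1 - 2*s*Real.cos x + s^2)| ≤ -2*Real.log (1-s) := by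
    intro x
    have h1 : (1-s)^2 ≤ 1 - 2*s*Real.cos x + s^2 := by
      nlinarith [Real.cos_le_one x, Real.neg_one_le_cos x]
    have h2 : 1 - 2*s*Real.cos x + s^2 ≤ (1+s)^2 := by
      nlinarith [Real.cos_le_one x, Real.neg_one_le_cos x]
    have hpos : (0:ℝ) < (1-s)^2 := by nlinarith
    rw [abs_le]
    constructor
    · calc -(-2*Real.log (1-s)) = Real.log ((1-s)^2) := by
            rw [Real.log_pow]; push_cast; ring
      _ ≤ _ := Real.log_le_log hpos h1
    · calc Real.log (1 - 2*s*Real.cos x + s^2) ≤ Real.log ((1+s)^2) :=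
            Real.log_le_log (P_pos hs' x) h2
      _ = 2*Real.log (1+s) := by rw [Real.log_pow]; push_cast; ring
      _ ≤ -2*Real.log (1-s) := by
          have hlog : Real.log (1+s) + Real.log (1-s) ≤ 0 := by
            rw [← Real.log_mul (by nlinarith) (by nlinarith)]
            apply Real.log_nonpos (by nlinarith) (by nlinarith)
          linarith
  have key := intervalIntegral.norm_integral_le_of_norm_le_const
    (C := -2*Real.log (1-s)) (f := fun x => Real.log (1 - 2*s*Real.cos x + s^2))
    (a := 0) (b := 2*π) (fun x _ => hb x)
  rw [Real.norm_eq_abs] at key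
  have hpi : |2*π - 0| = 2*π := by rw [sub_zero, abs_of_nonneg Real.two_pi_pos.le]
  rw [hpi] at key
  calc |Lr s| ≤ -2*Real.log (1-s) * (2*π) := key
  _ = 4*π*(-Real.log (1-s)) := by ring

lemma Lr_zero {r : ℝ} (hr0 : 0 ≤ r) (hr : r < 1) : Lr r = 0 := by
  have h2n : ∀ n : ℕ, (2:ℕ)^n ≠ 0 := fun n => (pow_pos (by norm_num : (0:ℕ) < 2) n).ne'
  have hpow : ∀ n : ℕ, Lr (r^(2^n)) = 2^n * Lr r := by
    intro n
    induction n with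
    | zero => simp
    | succ n ih =>
      have h1 : r^(2^(n+1)) = (r^(2^n))^2 := by rw [← pow_mul]; ring_nf
      have h2 : (0:ℝ) ≤ r^(2^n) := pow_nonneg hr0 _
      have h3 : r^(2^n) < 1 := pow_lt_one₀ hr0 hr (h2n n)
      rw [h1, Lr_double h2 h3, ih, pow_succ]; ring
  have hbnd : ∀ n : ℕ, |Lr r| ≤ (4*π*(-Real.log (1-r))) / 2^n := by
    intro n
    have h2 : (0:ℝ) ≤ r^(2^n) := pow_nonneg hr0 _
    have h3 : r^(2^n) < 1 := pow_lt_one₀ hr0 hr (h2n n)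
    have h4 : r^(2^n) ≤ r := by
      calc r^(2^n) ≤ r^1 := pow_le_pow_of_le_one hr0 hr.le (Nat.one_le_two_pow)
      _ = r := pow_one r
    have hlog : -Real.log (1 - r^(2^n)) ≤ -Real.log (1-r) := by
      have := Real.log_le_log (by linarith) (by linarith : 1 - r ≤ 1 - r^(2^n))
      linarith
    have hb := Lr_bound h2 h3
    have heq : |Lr (r^(2^n))| = 2^n * |Lr r| := by
      rw [hpow n, abs_mul, abs_of_nonneg (by positivity : (0:ℝ) ≤ (2:ℝ)^n)]
    rw [heq] at hb
    have hb' : (2:ℝ)^n * |Lr r| ≤ 4*π*(-Real.log (1-r)) := by nlinarith [Real.pi_pos]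
    rw [le_div_iff₀ (by positivity : (0:ℝ) < (2:ℝ)^n)]
    nlinarith [hb']
  have htend : Filter.Tendsto (fun n : ℕ => (4*π*(-Real.log (1-r))) / 2^n)
      Filter.atTop (nhds 0) := by
    apply Filter.Tendsto.const_div_atTop
    exact tendsto_pow_atTop_atTop_of_one_lt one_lt_two
  have : |Lr r| ≤ 0 := ge_of_tendsto' htend hbnd
  have := abs_nonneg (Lr r)
  have : |Lr r| = 0 := le_antisymm ‹|Lr r| ≤ 0› this
  exact abs_eq_zero.mp this


open Complex

lemma normSq_exp_sub (c : ℂ) (x : ℝ) :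
    Complex.normSq (Complex.exp (x * I) - c)
      = 1 - 2*(‖c‖)*Real.cos (x - Complex.arg c) + (‖c‖)^2 := by
  rw [Complex.normSq_sub]
  have h1 : Complex.normSq (Complex.exp (x * I)) = 1 := by
    rw [← Complex.sq_norm, Complex.norm_exp_ofReal_mul_I]; norm_num
  have h2 : (Complex.exp (↑x * I) * (starRingEnd ℂ) c).re
      = (‖c‖) * Real.cos (x - Complex.arg c) := by
    conv_lhs => rw [← Complex.norm_mul_exp_arg_mul_I c]
    rw [map_mul, ← Complex.exp_conj]
    have : (starRingEnd ℂ) ((Complex.arg c : ℂ) * I) = -(Complex.arg c : ℂ) * I := by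
      simp [Complex.conj_ofReal]
    rw [this, Complex.conj_ofReal]
    rw [show Complex.exp (↑x * I) * (↑(‖c‖) * Complex.exp (-↑(Complex.arg c) * I))
        = ↑(‖c‖) * (Complex.exp (↑x * I) * Complex.exp (-↑(Complex.arg c) * I)) from by ring,
      ← Complex.exp_add]
    have h3 : (x:ℂ) * I + -(Complex.arg c : ℂ) * I = ((x - Complex.arg c : ℝ) : ℂ) * I := by
      push_cast; ring
    rw [h3, Complex.re_ofReal_mul, Complex.exp_ofReal_mul_I_re]
  rw [h1, h2, ← Complex.sq_norm]
  ring

lemma jensen_lt_one {c : ℂ} (hc : ‖c‖ < 1) :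
    (∫ x in (0:ℝ)..(2*π), Real.log (Complex.normSq (Complex.exp (x * I) - c))) = 0 := by
  have heq : ∀ x ∈ Set.uIcc (0:ℝ) (2*π), Real.log (Complex.normSq (Complex.exp (x * I) - c))
      = (fun y => Real.log (1 - 2*(‖c‖)*Real.cos y + (‖c‖)^2)) (x - Complex.arg c) := by
    intro x _; rw [normSq_exp_sub]
  rw [intervalIntegral.integral_congr heq,
    intervalIntegral.integral_comp_sub_right
      (fun y => Real.log (1 - 2*(‖c‖)*Real.cos y + (‖c‖)^2)) (Complex.arg c)]
  have hper := (P_periodic (‖c‖)).intervalIntegral_add_eq (0 - Complex.arg c) 0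
  simp only [zero_add] at hper
  rw [show (2*π - Complex.arg c : ℝ) = (0 - Complex.arg c) + 2*π by ring, hper]
  exact Lr_zero (norm_nonneg c) hc


lemma stepA (lam E x : ℝ) (z u v : ℂ)
    (hz : (lam:ℂ) * z = E + I) (huv : u*v = 1) (hsum : u+v = 2*z) :
    1 + (E - lam * Real.cos x)^2
      = (lam/2)^2 * Complex.normSq (Complex.exp (↑x*I) - u)
        * Complex.normSq (Complex.exp (↑x*I) - v) := by
  have hid : (lam:ℂ) * Complex.cos ↑x - (E+I)
      = ((lam:ℂ)/2) * Complex.exp (-↑x*I) * ((Complex.exp (↑x*I) - u) * (Complex.exp (↑x*I) - v)) := by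
    have hcos : Complex.cos ↑x = (Complex.exp (↑x*I) + Complex.exp (-↑x*I))/2 := by
      rw [Complex.exp_mul_I, show (-↑x*I : ℂ) = (-↑x)*I by ring, Complex.exp_mul_I,
        Complex.cos_neg, Complex.sin_neg]
      ring
    have he : Complex.exp (↑x*I) * Complex.exp (-↑x*I) = 1 := by
      rw [← Complex.exp_add]; ring_nf; exact Complex.exp_zero
    rw [hcos]
    linear_combination hz + ((lam:ℂ)/2)*hsum
      - ((lam:ℂ)/2)*(Complex.exp (↑x*I) - u - v)*he - ((lam:ℂ)/2)*Complex.exp (-↑x*I)*huv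
  have h1 : Complex.normSq ((lam:ℂ) * Complex.cos ↑x - (E+I))
      = 1 + (E - lam * Real.cos x)^2 := by
    rw [← Complex.ofReal_cos, ← Complex.ofReal_mul]
    rw [Complex.normSq_apply]
    simp [Complex.sub_re, Complex.sub_im, Complex.add_re, Complex.add_im, Complex.cos_ofReal_re]
    ring
  have h2 : Complex.normSq (((lam:ℂ)/2) * Complex.exp (-↑x*I)
      * ((Complex.exp (↑x*I) - u) * (Complex.exp (↑x*I) - v)))
      = (lam/2)^2 * Complex.normSq (Complex.exp (↑x*I) - u)
        * Complex.normSq (Complex.exp (↑x*I) - v) := by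
    rw [map_mul, map_mul, map_mul]
    have e1 : Complex.normSq ((lam:ℂ)/2) = (lam/2)^2 := by
      rw [show ((lam:ℂ)/2) = ((lam/2 : ℝ) : ℂ) by push_cast; ring, Complex.normSq_ofReal]
      ring
    have e2 : Complex.normSq (Complex.exp (-↑x*I)) = 1 := by
      rw [← Complex.sq_norm, show (-↑x*I : ℂ) = ((-x : ℝ):ℂ)*I by push_cast; ring,
        Complex.norm_exp_ofReal_mul_I]
      norm_num
    rw [e1, e2]; ring
  rw [← h1, hid, h2]

lemma stepB (x : ℝ) (v : ℂ) (hv : v ≠ 0) :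
    Complex.normSq (Complex.exp (↑x*I) - v)
      = Complex.normSq v * Complex.normSq (Complex.exp (↑x*I) - (starRingEnd ℂ) v⁻¹) := by
  have he : Complex.exp (↑x*I) * Complex.exp (-↑x*I) = 1 := by
    rw [← Complex.exp_add]; ring_nf; exact Complex.exp_zero
  have key : Complex.exp (↑x*I) - v
      = - Complex.exp (↑x*I) * ((starRingEnd ℂ) (Complex.exp (↑x*I) - (starRingEnd ℂ) v⁻¹)) * v := by
    rw [map_sub, Complex.conj_conj]
    have hce : (starRingEnd ℂ) (Complex.exp (↑x*I)) = Complex.exp (-↑x*I) := by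
      rw [← Complex.exp_conj]; congr 1
      simp [Complex.conj_ofReal]
    rw [hce]
    have expand : - Complex.exp (↑x*I) * (Complex.exp (-↑x*I) - v⁻¹) * v
        = Complex.exp (↑x*I) - Complex.exp (↑x*I) * Complex.exp (-↑x*I) * v := by
      have hvv : v⁻¹ * v = 1 := inv_mul_cancel₀ hv
      linear_combination Complex.exp (↑x*I) * hvv
    rw [expand, he, one_mul]
  rw [key]
  rw [map_mul, map_mul, Complex.normSq_neg, Complex.normSq_conj]
  have e2 : Complex.normSq (Complex.exp (↑x*I)) = 1 := by
    rw [← Complex.sq_norm, Complex.norm_exp_ofReal_mul_I]; norm_num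
  rw [e2]; ring


lemma main_est (E lam : ℝ) (hlam : 2*Real.sqrt (E^2+1) + 2 ≤ lam) :
    ∃ t : ℝ, 0 ≤ t ∧ t ≤ 2*Real.sqrt (E^2+1)/lam ∧
      (1/(4*π)) * (∫ x in (0:ℝ)..(2*π), Real.log (1 + (E - lam*Real.cos x)^2))
        - Real.log (lam/2) = t := by
  have hs0 : 0 ≤ Real.sqrt (E^2+1) := Real.sqrt_nonneg _
  have hlam0 : (0:ℝ) < lam := by linarith
  have hlamne : ((lam:ℝ):ℂ) ≠ 0 := Complex.ofReal_ne_zero.mpr hlam0.ne'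
  set z : ℂ := ((E:ℂ) + I)/lam with hz_def
  have hz : (lam:ℂ) * z = E + I := by
    rw [hz_def]; field_simp
  have habsz : ‖z‖ = Real.sqrt (E^2+1)/lam := by
    rw [hz_def, norm_div, Complex.norm_real, Real.norm_eq_abs, abs_of_pos hlam0]
    congr 1
    rw [Complex.norm_def]
    congr 1
    simp [Complex.normSq_apply]
    ring
  obtain ⟨w, hw⟩ := IsAlgClosed.exists_pow_nat_eq (k := ℂ) (z^2 - 1) (n := 2) two_pos
  have hprod : (z - w)*(z + w) = 1 := by linear_combination (-1:ℂ)*hw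
  set v : ℂ := if 1 ≤ ‖z+w‖ then z+w else z-w with hv_def
  set u : ℂ := if 1 ≤ ‖z+w‖ then z-w else z+w with hu_def
  have huv : u * v = 1 := by
    by_cases h : 1 ≤ ‖z+w‖
    · rw [hu_def, hv_def, if_pos h, if_pos h]; exact hprod
    · rw [hu_def, hv_def, if_neg h, if_neg h, mul_comm]; exact hprod
  have hsum : u + v = 2*z := by
    by_cases h : 1 ≤ ‖z+w‖
    · rw [hu_def, hv_def, if_pos h, if_pos h]; ring
    · rw [hu_def, hv_def, if_neg h, if_neg h]; ring
  have hv1 : 1 ≤ ‖v‖ := by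
    by_cases h : 1 ≤ ‖z+w‖
    · rw [hv_def, if_pos h]; exact h
    · rw [hv_def, if_neg h]
      push_neg at h
      have habs : ‖z-w‖ * ‖z+w‖ = 1 := by
        rw [← norm_mul, hprod, norm_one]
      nlinarith [norm_nonneg (z-w), norm_nonneg (z+w)]
  have hvne : v ≠ 0 := by
    intro h; rw [h, mul_zero] at huv; exact one_ne_zero huv.symm
  have habsuv : ‖u‖ * ‖v‖ = 1 := by
    rw [← norm_mul, huv, norm_one]
  have hu1 : ‖u‖ ≤ 1 := by nlinarith [norm_nonneg u]
  have hzim : lam * z.im = 1 := by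
    have := congrArg Complex.im hz
    simpa [Complex.mul_im] using this
  have hu_lt : ‖u‖ < 1 := by
    rcases lt_or_eq_of_le hu1 with h | h
    · exact h
    · exfalso
      have hvabs1 : ‖v‖ = 1 := by rw [h, one_mul] at habsuv; exact habsuv
      have hinv : u⁻¹ = v := inv_eq_of_mul_eq_one_right huv
      have hconj : u⁻¹ = (starRingEnd ℂ) u := by
        rw [Complex.inv_def, Complex.normSq_eq_norm_sq, h]
        norm_num
      have himv : (u + v).im = 0 := by
        rw [← hinv, hconj]
        simp [Complex.add_im, Complex.conj_im]
      rw [hsum] at himv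
      have : (2*z).im = 2 * z.im := by simp [Complex.mul_im]
      rw [this] at himv
      have hzim' : z.im = 1/lam := by field_simp at hzim ⊢; linarith
      rw [hzim'] at himv
      have : (0:ℝ) < 1/lam := by positivity
      linarith
  have hv_gt : 1 < ‖v‖ := by
    nlinarith [norm_nonneg u, norm_nonneg v]
  set c : ℂ := (starRingEnd ℂ) v⁻¹ with hc_def
  have habsc : ‖c‖ < 1 := by
    rw [hc_def, Complex.norm_conj, norm_inv]
    rw [inv_lt_one_iff₀]
    right; exact hv_gt
  -- positivity of normSq factors
  have habse : ∀ x : ℝ, ‖Complex.exp (↑x*I)‖ = 1 := fun x =>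
    Complex.norm_exp_ofReal_mul_I x
  have hnsqu : ∀ x : ℝ, 0 < Complex.normSq (Complex.exp (↑x*I) - u) := by
    intro x
    apply Complex.normSq_pos.mpr
    intro h
    have := sub_eq_zero.mp h
    rw [← this, habse x] at hu_lt
    exact lt_irrefl 1 hu_lt
  have hnsqc : ∀ x : ℝ, 0 < Complex.normSq (Complex.exp (↑x*I) - c) := by
    intro x
    apply Complex.normSq_pos.mpr
    intro h
    have := sub_eq_zero.mp h
    rw [← this, habse x] at habsc
    exact lt_irrefl 1 habsc
  have hnsqv : 0 < Complex.normSq v := Complex.normSq_pos.mpr hvne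
  have hA : (0:ℝ) < (lam/2)^2 * Complex.normSq v := by positivity
  -- pointwise identity
  have hpt : ∀ x ∈ Set.uIcc (0:ℝ) (2*π), Real.log (1 + (E - lam*Real.cos x)^2)
      = Real.log ((lam/2)^2 * Complex.normSq v)
        + (Real.log (Complex.normSq (Complex.exp (↑x*I) - u))
          + Real.log (Complex.normSq (Complex.exp (↑x*I) - c))) := by
    intro x _
    rw [stepA lam E x z u v hz huv hsum, stepB x v hvne, ← hc_def]
    rw [show (lam/2)^2 * Complex.normSq (Complex.exp (↑x*I) - u)
        * (Complex.normSq v * Complex.normSq (Complex.exp (↑x*I) - c))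
      = ((lam/2)^2 * Complex.normSq v) * (Complex.normSq (Complex.exp (↑x*I) - u)
        * Complex.normSq (Complex.exp (↑x*I) - c)) from by ring]
    rw [Real.log_mul hA.ne' (mul_pos (hnsqu x) (hnsqc x)).ne', Real.log_mul (hnsqu x).ne' (hnsqc x).ne']
  -- continuity / integrability
  have contf : ∀ d : ℂ, ‖d‖ < 1 →
      Continuous fun x : ℝ => Real.log (Complex.normSq (Complex.exp (↑x*I) - d)) := by
    intro d hd
    apply Continuous.log
    · exact Complex.continuous_normSq.comp
        ((Complex.continuous_exp.comp ((Complex.continuous_ofReal).mul continuous_const)).sub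
          continuous_const)
    · intro x
      apply (Complex.normSq_pos.mpr _).ne'
      intro h
      have := sub_eq_zero.mp h
      rw [← this, habse x] at hd
      exact lt_irrefl 1 hd
  have intf : IntervalIntegrable (fun x : ℝ => Real.log (Complex.normSq (Complex.exp (↑x*I) - u)))
      MeasureTheory.volume 0 (2*π) := (contf u hu_lt).intervalIntegrable _ _
  have intg : IntervalIntegrable (fun x : ℝ => Real.log (Complex.normSq (Complex.exp (↑x*I) - c)))
      MeasureTheory.volume 0 (2*π) := (contf c habsc).intervalIntegrable _ _
  -- compute the integral
  have hInt : (∫ x in (0:ℝ)..(2*π), Real.log (1 + (E - lam*Real.cos x)^2))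
      = 2*π * Real.log ((lam/2)^2 * Complex.normSq v) := by
    rw [intervalIntegral.integral_congr hpt]
    rw [intervalIntegral.integral_add (intervalIntegrable_const) (intf.add intg)]
    rw [intervalIntegral.integral_add intf intg]
    rw [jensen_lt_one hu_lt, jensen_lt_one habsc]
    rw [intervalIntegral.integral_const]
    simp
  refine ⟨Real.log (‖v‖), Real.log_nonneg hv1, ?_, ?_⟩
  · have h1 : Real.log (‖v‖) ≤ ‖v‖ - 1 :=
      Real.log_le_sub_one_of_pos (by linarith)
    have h2 : ‖v‖ ≤ 1 + 2*‖z‖ := by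
      have hvu : v = 2*z - u := by linear_combination hsum
      rw [hvu]
      calc ‖2*z - u‖ ≤ ‖2*z‖ + ‖u‖ := by
            rw [sub_eq_add_neg]
            calc _ ≤ ‖2*z‖ + ‖-u‖ := norm_add_le _ _
            _ = _ := by rw [norm_neg]
      _ ≤ 2*‖z‖ + 1 := by
          rw [norm_mul]
          simp
          linarith [hu_lt.le]
      _ = 1 + 2*‖z‖ := by ring
    calc Real.log (‖v‖) ≤ ‖v‖ - 1 := h1
    _ ≤ 2*‖z‖ := by linarith
    _ = 2*Real.sqrt (E^2+1)/lam := by rw [habsz]; ring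
  · rw [hInt]
    have hpi : (0:ℝ) < π := Real.pi_pos
    have hlog1 : Real.log ((lam/2)^2 * Complex.normSq v)
        = 2*Real.log (lam/2) + 2*Real.log (‖v‖) := by
      rw [Real.log_mul (by positivity) hnsqv.ne']
      rw [show Complex.normSq v = (‖v‖)^2 from (Complex.sq_norm v).symm]
      rw [Real.log_pow, Real.log_pow]
      push_cast; ring
    rw [hlog1]
    field_simp
    ring

open Asymptotics Filter

/-- For every fixed real `E`, the averaged logarithm of the column norm of the transfer
matrix, `(1/(4π)) ∫_0^{2π} log(1 + (E − λ·cos x)²) dx`, exceeds `log(λ/2)` by a term of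
order `O(1/λ)` as `λ → +∞`. -/
theorem averaged_log_column_norm_excess_isBigO (E : ℝ) :
    (fun lam : ℝ =>
        ((1 / (4 * π)) *
            (∫ x in (0:ℝ)..(2 * π), Real.log (1 + (E - lam * Real.cos x) ^ 2)))
          - Real.log (lam / 2))
      =O[atTop] fun lam : ℝ => 1 / lam := by
  rw [Asymptotics.isBigO_iff]
  refine ⟨2*Real.sqrt (E^2+1), ?_⟩
  filter_upwards [Filter.eventually_ge_atTop (2*Real.sqrt (E^2+1) + 2)] with lam hlam
  obtain ⟨t, ht0, htle, hteq⟩ := main_est E lam hlam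
  have hlam0 : (0:ℝ) < lam := by
    have := Real.sqrt_nonneg (E^2+1); linarith
  simp only [hteq]
  rw [Real.norm_eq_abs, Real.norm_eq_abs, _root_.abs_of_nonneg ht0,
    _root_.abs_of_nonneg (by positivity : (0:ℝ) ≤ 1/lam)]
  calc t ≤ 2*Real.sqrt (E^2+1)/lam := htle
  _ = 2*Real.sqrt (E^2+1) * (1/lam) := by ring
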